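/- Let G be a connected graph, let T be a spanning tree of G, let (L, P) be a leaf selection for T, and let T' be obtained from T by an (L,P)-leaf reconfiguration, i.e., by removing for each leaf v ∈ L the edge between v and its parent p_T(v) and adding an edge between v and some vertex u ∈ P(v). Then T' is again a spanning tree of G. -/

import Mathlib

open SimpleGraph

/-- In a cycle based at `v`, the vertex `v` has two distinct neighbours. -/
lemma cycle_two_neighbors {V : Type} {H : SimpleGraph V} {v : V}
    (c : H.Walk v v) (hc : c.IsCycle) :
    ∃ w₁ w₂, w₁ ≠ w₂ ∧ H.Adj v w₁ ∧ H.Adj v w₂ := by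
  cases c with
  | nil => exact absurd hc Walk.IsCycle.not_of_nil
  | @cons _ b _ h q =>
    cases hq : q.reverse with
    | nil => exact absurd rfl h.ne
    | @cons _ b₂ _ h₂ q₂ =>
      refine ⟨b, b₂, ?_, h, h₂⟩
      rintro rfl
      have hmem : s(v, b) ∈ q.edges := by
        have : s(v, b) ∈ q.reverse.edges := by rw [hq]; simp [Sym2.eq_swap]
        simpa [Walk.edges_reverse] using this
      exact ((Walk.cons_isCycle_iff _ _).mp hc).2 hmem



/-- Let `G` be a connected graph, let `T` be a spanning tree of `G`, let `(L, P)` be a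
leaf selection for `T` (so `L` is a set of leaves of `T`, and for each `v ∈ L` the set
of potential parents `P v` satisfies `p_T(v) ∈ P v ⊆ N_G(v) \ L`), and let `T'` be
obtained from `T` by an `(L,P)`-leaf reconfiguration: for each leaf `v ∈ L` the edge
between `v` and its parent `p_T(v)` is removed and an edge between `v` and some vertex
`σ v ∈ P v` is added. Then `T'` is again a spanning tree of `G`.

Here a leaf of `T` is a vertex `v` with exactly one neighbour in `T`, its parent
`pT v` is that unique neighbour (encoded by `T.Adj v (pT v)`), and `T'` is the graph
whose edges are the edges of `T` with both endpoints outside `L` together with the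
edges `{v, σ v}` for `v ∈ L`. -/
theorem leaf_reconfiguration_is_spanning_tree
    (V : Type) [Fintype V] [DecidableEq V] (G : SimpleGraph V) (hG : G.Connected)
    (T : SimpleGraph V) (hTle : T ≤ G) (hT : T.IsTree)
    (L : Set V) (P : V → Set V) (pT : V → V) (σ : V → V)
    (hleaf : ∀ v ∈ L, (T.neighborSet v).ncard = 1)
    (hparent : ∀ v ∈ L, T.Adj v (pT v))
    (hP : ∀ v ∈ L, pT v ∈ P v ∧ P v ⊆ G.neighborSet v \ L)
    (hσ : ∀ v ∈ L, σ v ∈ P v) :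
    SimpleGraph.fromRel
        (fun x y => (T.Adj x y ∧ x ∉ L ∧ y ∉ L) ∨ (x ∈ L ∧ y = σ x)) ≤ G ∧
    (SimpleGraph.fromRel
        (fun x y => (T.Adj x y ∧ x ∉ L ∧ y ∉ L) ∨ (x ∈ L ∧ y = σ x))).IsTree := by
  classical
  set T' := SimpleGraph.fromRel
      (fun x y => (T.Adj x y ∧ x ∉ L ∧ y ∉ L) ∨ (x ∈ L ∧ y = σ x)) with hT'def
  have hσG : ∀ v ∈ L, G.Adj v (σ v) ∧ σ v ∉ L := by
    intro v hv
    have h1 := (hP v hv).2 (hσ v hv)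
    exact ⟨h1.1, h1.2⟩
  have adjT' : ∀ {x y}, T'.Adj x y ↔ x ≠ y ∧
      ((T.Adj x y ∧ x ∉ L ∧ y ∉ L) ∨ (x ∈ L ∧ y = σ x) ∨
       (T.Adj y x ∧ y ∉ L ∧ x ∉ L) ∨ (y ∈ L ∧ x = σ y)) := by
    intro x y
    rw [hT'def, SimpleGraph.fromRel_adj]
    tauto
  have hle : T' ≤ G := by
    intro x y hxy
    rw [adjT'] at hxy
    obtain ⟨hne, h | h | h | h⟩ := hxy
    · exact hTle h.1
    · exact h.2 ▸ (hσG x h.1).1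
    · exact (hTle h.1).symm
    · exact h.2 ▸ ((hσG y h.1).1).symm
  have uniq : ∀ v ∈ L, ∀ w, T.Adj v w → w = pT v := by
    intro v hv w hw
    obtain ⟨a, ha⟩ := Set.ncard_eq_one.mp (hleaf v hv)
    have h1 : pT v ∈ T.neighborSet v := hparent v hv
    have h2 : w ∈ T.neighborSet v := hw
    rw [ha, Set.mem_singleton_iff] at h1 h2
    rw [h1, h2]
  have newAdj : ∀ v ∈ L, T'.Adj v (σ v) := by
    intro v hv
    exact adjT'.mpr ⟨(hσG v hv).1.ne, Or.inr (Or.inl ⟨hv, rfl⟩)⟩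
  have oldAdj : ∀ {x y}, T.Adj x y → x ∉ L → y ∉ L → T'.Adj x y := by
    intro x y h hx hy
    exact adjT'.mpr ⟨h.ne, Or.inl ⟨h, hx, hy⟩⟩
  have uniqT' : ∀ v ∈ L, ∀ w, T'.Adj v w → w = σ v := by
    intro v hv w hw
    rw [adjT'] at hw
    obtain ⟨hne, h | h | h | h⟩ := hw
    · exact absurd hv h.2.1
    · exact h.2
    · exact absurd hv h.2.2
    · exact absurd (h.2 ▸ hv) (hσG w h.1).2
  have hacyc : T'.IsAcyclic := by
    intro a c hc
    have hsup : ∀ v ∈ c.support, v ∉ L := by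
      intro v hv hvL
      obtain ⟨w₁, w₂, hne, h1, h2⟩ := cycle_two_neighbors (c.rotate v hv) (hc.rotate hv)
      exact hne ((uniqT' v hvL w₁ h1).trans (uniqT' v hvL w₂ h2).symm)
    have hedges : ∀ e ∈ c.edges, e ∈ T.edgeSet := by
      intro e
      induction e using Sym2.ind with
      | _ x y =>
        intro he
        have hx := hsup x (SimpleGraph.Walk.fst_mem_support_of_mem_edges c he)
        have hy := hsup y (SimpleGraph.Walk.snd_mem_support_of_mem_edges c he)
        have hadj : T'.Adj x y := SimpleGraph.Walk.adj_of_mem_edges c he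
        rw [adjT'] at hadj
        obtain ⟨hne, h | h | h | h⟩ := hadj
        · exact h.1
        · exact absurd h.1 hx
        · exact h.1.symm
        · exact absurd h.1 hy
    exact hT.IsAcyclic (c.transfer T hedges) (hc.transfer hedges)
  have key : ∀ n (a b : V), a ∉ L → b ∉ L →
      ∀ p : T.Walk a b, p.length ≤ n → T'.Reachable a b := by
    intro n
    induction n with
    | zero =>
      intro a b ha hb p hp
      cases p with
      | nil => exact SimpleGraph.Reachable.refl _
      | cons h q => simp at hp
    | succ n ih =>
      intro a b ha hb p hp
      cases p with
      | nil => exact SimpleGraph.Reachable.refl _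
      | @cons _ c _ h q =>
        by_cases hcL : c ∈ L
        · cases q with
          | nil => exact absurd hcL hb
          | @cons _ d _ h2 q2 =>
            have hd : d = pT c := uniq c hcL d h2
            have ha2 : a = pT c := uniq c hcL a h.symm
            have had : d = a := hd.trans ha2.symm
            subst had
            refine ih d b ha hb q2 ?_
            simp only [SimpleGraph.Walk.length_cons] at hp
            omega
        · refine (oldAdj h ha hcL).reachable.trans (ih c b hcL hb q ?_)
          simp only [SimpleGraph.Walk.length_cons] at hp
          omega
  have hconn : T'.Connected := by
    rw [SimpleGraph.connected_iff]
    refine ⟨?_, hG.nonempty⟩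
    intro x y
    have reach : ∀ z : V, ∃ z', z' ∉ L ∧ T'.Reachable z z' := by
      intro z
      by_cases hz : z ∈ L
      · exact ⟨σ z, (hσG z hz).2, (newAdj z hz).reachable⟩
      · exact ⟨z, hz, SimpleGraph.Reachable.refl z⟩
    obtain ⟨x', hx', hrx⟩ := reach x
    obtain ⟨y', hy', hry⟩ := reach y
    obtain ⟨p⟩ := hT.isConnected.preconnected x' y'
    exact hrx.trans ((key p.length x' y' hx' hy' p le_rfl).trans hry.symm)
  exact ⟨hle, ⟨hconn, hacyc⟩⟩
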